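/- Let A := {a ∈ ℝⁿ : a̲ ⪯ a ⪯ ā, a_min ≤ 1ᵀa ≤ a_max} be nonempty. A point v ∈ A is an extreme point of A if and only if either (i) vᵢ ∈ {a̲ᵢ, āᵢ} for all i = 1,…,n, or (ii) there is an index i such that vⱼ ∈ {a̲ⱼ, āⱼ} for all j ≠ i and 1ᵀv ∈ {a_min, a_max}. -/

import Mathlib

open scoped BigOperators

lemma pinch_le {t s a b c : ℝ} (ht : 0 < t) (hs : 0 < s) (hts : t + s = 1)
    (heq : t * a + s * b = c) (ha : c ≤ a) (hb : c ≤ b) : a = c ∧ b = c := by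
  have hc : t * c + s * c = c := by rw [← add_mul, hts, one_mul]
  have h1 : t * c ≤ t * a := mul_le_mul_of_nonneg_left ha ht.le
  have h2 : s * c ≤ s * b := mul_le_mul_of_nonneg_left hb hs.le
  have ha' : t * a ≤ t * c := by linarith
  have hb' : s * b ≤ s * c := by linarith
  exact ⟨le_antisymm (le_of_mul_le_mul_left ha' ht) ha,
    le_antisymm (le_of_mul_le_mul_left hb' hs) hb⟩

lemma pinch_ge {t s a b c : ℝ} (ht : 0 < t) (hs : 0 < s) (hts : t + s = 1)
    (heq : t * a + s * b = c) (ha : a ≤ c) (hb : b ≤ c) : a = c ∧ b = c := by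
  have hc : t * c + s * c = c := by rw [← add_mul, hts, one_mul]
  have h1 : t * a ≤ t * c := mul_le_mul_of_nonneg_left ha ht.le
  have h2 : s * b ≤ s * c := mul_le_mul_of_nonneg_left hb hs.le
  have ha' : t * c ≤ t * a := by linarith
  have hb' : s * c ≤ s * b := by linarith
  exact ⟨le_antisymm ha (le_of_mul_le_mul_left ha' ht),
    le_antisymm hb (le_of_mul_le_mul_left hb' hs)⟩

/-- Vertex characterization for the box-with-budget polytope
`A = {a : a̲ ⪯ a ⪯ ā, a_min ≤ 1ᵀa ≤ a_max}`: `v ∈ A` is an extreme point iff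
(i) every coordinate is at a bound, or (ii) all coordinates but one are at a
bound and the budget constraint is tight. -/
theorem box_budget_polytope_extreme_point_iff
    {n : ℕ} (lo hi : Fin n → ℝ) (amin amax : ℝ)
    (hbnd : ∀ i, lo i ≤ hi i) (hab : amin ≤ amax)
    (A : Set (Fin n → ℝ))
    (hA : A = {a : Fin n → ℝ |
      (∀ i, lo i ≤ a i ∧ a i ≤ hi i) ∧ amin ≤ ∑ i, a i ∧ ∑ i, a i ≤ amax})
    (hAne : A.Nonempty) (v : Fin n → ℝ) (hv : v ∈ A) :
    v ∈ Set.extremePoints ℝ A ↔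
      ((∀ i, v i = lo i ∨ v i = hi i) ∨
        (∃ i : Fin n, (∀ j, j ≠ i → v j = lo j ∨ v j = hi j) ∧
          (∑ j, v j = amin ∨ ∑ j, v j = amax))) := by
  subst hA
  obtain ⟨hvbox, hvmin, hvmax⟩ := hv
  constructor
  · -- extreme → condition
    intro hext
    by_contra h
    push_neg at h
    obtain ⟨⟨i, hil, hih⟩, h2⟩ := h
    have hilo : lo i < v i := lt_of_le_of_ne (hvbox i).1 (Ne.symm hil)
    have hihi : v i < hi i := lt_of_le_of_ne (hvbox i).2 hih
    -- key: no nonzero symmetric perturbation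
    have key : ∀ w : Fin n → ℝ, w ≠ 0 →
        (v + w) ∈ {a : Fin n → ℝ |
          (∀ i, lo i ≤ a i ∧ a i ≤ hi i) ∧ amin ≤ ∑ i, a i ∧ ∑ i, a i ≤ amax} →
        (v - w) ∈ {a : Fin n → ℝ |
          (∀ i, lo i ≤ a i ∧ a i ≤ hi i) ∧ amin ≤ ∑ i, a i ∧ ∑ i, a i ≤ amax} →
        False := by
      intro w hw hp hm
      obtain ⟨-, hext2⟩ := hext
      have hseg : v ∈ openSegment ℝ (v + w) (v - w) := by
        refine ⟨1/2, 1/2, by norm_num, by norm_num, by norm_num, ?_⟩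
        funext k
        simp [Pi.add_apply, Pi.sub_apply]
        ring
      have := (hext2 hp hm hseg)
      apply hw
      funext k
      have := congrFun this k
      simpa using this
    by_cases hc : ∀ j, j ≠ i → v j = lo j ∨ v j = hi j
    · -- budget must be non-tight: single-coordinate perturbation
      obtain ⟨hne1, hne2⟩ := h2 i hc
      have hmin : amin < ∑ j, v j := lt_of_le_of_ne hvmin (Ne.symm hne1)
      have hmax : (∑ j, v j) < amax := lt_of_le_of_ne hvmax hne2
      set ε := min (min (v i - lo i) (hi i - v i)) (min (∑ j, v j - amin) (amax - ∑ j, v j)) with hε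
      have hεpos : 0 < ε := by
        apply lt_min <;> apply lt_min <;> linarith
      have hε1 : ε ≤ v i - lo i := le_trans (min_le_left _ _) (min_le_left _ _)
      have hε2 : ε ≤ hi i - v i := le_trans (min_le_left _ _) (min_le_right _ _)
      have hε3 : ε ≤ ∑ j, v j - amin := le_trans (min_le_right _ _) (min_le_left _ _)
      have hε4 : ε ≤ amax - ∑ j, v j := le_trans (min_le_right _ _) (min_le_right _ _)
      set w : Fin n → ℝ := Pi.single i ε with hw
      have hwsum : ∑ k, w k = ε := by
        simp [hw, Finset.sum_pi_single']
      have hwk : ∀ k, k ≠ i → w k = 0 := fun k hk => by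
        simp [hw, Pi.single_eq_of_ne hk]
      have hwi : w i = ε := by simp [hw]
      refine key w ?_ ?_ ?_
      · intro h0
        have := congrFun h0 i
        rw [hwi] at this
        exact absurd this (by positivity)
      · refine ⟨fun k => ?_, ?_, ?_⟩
        · by_cases hk : k = i
          · subst hk
            simp only [Pi.add_apply, hwi]
            constructor <;> linarith [(hvbox k).1]
          · simp only [Pi.add_apply, hwk k hk, add_zero]
            exact hvbox k
        · simp only [Pi.add_apply, Finset.sum_add_distrib, hwsum]; linarith
        · simp only [Pi.add_apply, Finset.sum_add_distrib, hwsum]; linarith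
      · refine ⟨fun k => ?_, ?_, ?_⟩
        · by_cases hk : k = i
          · subst hk
            simp only [Pi.sub_apply, hwi]
            constructor <;> linarith [(hvbox k).2]
          · simp only [Pi.sub_apply, hwk k hk, sub_zero]
            exact hvbox k
        · simp only [Pi.sub_apply, Finset.sum_sub_distrib, hwsum]; linarith
        · simp only [Pi.sub_apply, Finset.sum_sub_distrib, hwsum]; linarith
    · -- two free coordinates
      push_neg at hc
      obtain ⟨j, hji, hjl, hjh⟩ := hc
      have hjlo : lo j < v j := lt_of_le_of_ne (hvbox j).1 (Ne.symm hjl)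
      have hjhi : v j < hi j := lt_of_le_of_ne (hvbox j).2 hjh
      set ε := min (min (v i - lo i) (hi i - v i)) (min (v j - lo j) (hi j - v j)) with hε
      have hεpos : 0 < ε := by
        apply lt_min <;> apply lt_min <;> linarith
      have hε1 : ε ≤ v i - lo i := le_trans (min_le_left _ _) (min_le_left _ _)
      have hε2 : ε ≤ hi i - v i := le_trans (min_le_left _ _) (min_le_right _ _)
      have hε3 : ε ≤ v j - lo j := le_trans (min_le_right _ _) (min_le_left _ _)
      have hε4 : ε ≤ hi j - v j := le_trans (min_le_right _ _) (min_le_right _ _)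
      set w : Fin n → ℝ := Pi.single i ε + Pi.single j (-ε) with hw
      have hwi : w i = ε := by
        simp [hw, Pi.single_eq_same, Pi.single_eq_of_ne (Ne.symm hji)]
      have hwj : w j = -ε := by
        simp [hw, Pi.single_eq_same, Pi.single_eq_of_ne hji]
      have hwk : ∀ k, k ≠ i → k ≠ j → w k = 0 := fun k hki hkj => by
        simp [hw, Pi.single_eq_of_ne hki, Pi.single_eq_of_ne hkj]
      have hwsum : ∑ k, w k = 0 := by
        simp [hw, Finset.sum_add_distrib, Finset.sum_pi_single']
      refine key w ?_ ?_ ?_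
      · intro h0
        have := congrFun h0 i
        rw [hwi] at this
        exact absurd this (by positivity)
      · refine ⟨fun k => ?_, ?_, ?_⟩
        · by_cases hki : k = i
          · subst hki
            simp only [Pi.add_apply, hwi]
            constructor <;> linarith [(hvbox k).1]
          · by_cases hkj : k = j
            · subst hkj
              simp only [Pi.add_apply, hwj]
              constructor <;> linarith [(hvbox k).2]
            · simp only [Pi.add_apply, hwk k hki hkj, add_zero]
              exact hvbox k
        · simp only [Pi.add_apply, Finset.sum_add_distrib, hwsum]; linarith
        · simp only [Pi.add_apply, Finset.sum_add_distrib, hwsum]; linarith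
      · refine ⟨fun k => ?_, ?_, ?_⟩
        · by_cases hki : k = i
          · subst hki
            simp only [Pi.sub_apply, hwi]
            constructor <;> linarith [(hvbox k).2]
          · by_cases hkj : k = j
            · subst hkj
              simp only [Pi.sub_apply, hwj]
              constructor <;> linarith [(hvbox k).1]
            · simp only [Pi.sub_apply, hwk k hki hkj, sub_zero]
              exact hvbox k
        · simp only [Pi.sub_apply, Finset.sum_sub_distrib, hwsum]; linarith
        · simp only [Pi.sub_apply, Finset.sum_sub_distrib, hwsum]; linarith
  · -- condition → extreme
    intro h
    refine ⟨⟨hvbox, hvmin, hvmax⟩, ?_⟩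
    rintro x ⟨hxbox, hxmin, hxmax⟩ y ⟨hybox, hymin, hymax⟩ ⟨t, s, ht, hs, hts, heq⟩
    have hpt : ∀ k, t * x k + s * y k = v k := by
      intro k
      have := congrFun heq k
      simpa using this
    have hsum : t * (∑ k, x k) + s * (∑ k, y k) = ∑ k, v k := by
      rw [Finset.mul_sum, Finset.mul_sum, ← Finset.sum_add_distrib]
      exact Finset.sum_congr rfl fun k _ => hpt k
    have pin : ∀ k, (v k = lo k ∨ v k = hi k) → x k = v k ∧ y k = v k := by
      intro k hk
      rcases hk with hl | hr
      · exact pinch_le ht hs hts (hpt k) (hl ▸ (hxbox k).1) (hl ▸ (hybox k).1)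
      · exact pinch_ge ht hs hts (hpt k) (hr ▸ (hxbox k).2) (hr ▸ (hybox k).2)
    rcases h with hb | ⟨i, hb, htight⟩
    · exact funext fun k => (pin k (hb k)).1
    · have hsx : ∑ k, x k = ∑ k, v k ∧ ∑ k, y k = ∑ k, v k := by
        rcases htight with hmn | hmx
        · exact pinch_le ht hs hts hsum (hmn ▸ hxmin) (hmn ▸ hymin)
        · exact pinch_ge ht hs hts hsum (hmx ▸ hxmax) (hmx ▸ hymax)
      have hxj : ∀ j, j ≠ i → x j = v j := fun j hj => (pin j (hb j hj)).1
      have hyj : ∀ j, j ≠ i → y j = v j := fun j hj => (pin j (hb j hj)).2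
      have herase : ∀ z : Fin n → ℝ, ∑ k, z k = z i + ∑ k ∈ Finset.univ.erase i, z k :=
        fun z => (Finset.add_sum_erase _ _ (Finset.mem_univ i)).symm
      have hxe : ∑ k ∈ Finset.univ.erase i, x k = ∑ k ∈ Finset.univ.erase i, v k :=
        Finset.sum_congr rfl fun k hk => hxj k (Finset.ne_of_mem_erase hk)
      have hye : ∑ k ∈ Finset.univ.erase i, y k = ∑ k ∈ Finset.univ.erase i, v k :=
        Finset.sum_congr rfl fun k hk => hyj k (Finset.ne_of_mem_erase hk)
      have hxi : x i = v i := by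
        have h1 := herase x
        have h2 := herase v
        rw [hxe] at h1
        linarith [hsx.1]
      have hyi : y i = v i := by
        have h1 := herase y
        have h2 := herase v
        rw [hye] at h1
        linarith [hsx.2]
      funext k; by_cases hk : k = i
      · subst hk; exact hxi
      · exact hxj k hk
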